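/- Sylvester's determinant identity: Let R be a commutative ring, n ≥ 0, and A an (n+2)×(n+2) matrix over R. For any row indices i < j and column indices k < ℓ in Fin (n+2), one has det(A) · det(A_{i,j|k,ℓ}) = det(A_{i|k}) · det(A_{j|ℓ}) − det(A_{i|ℓ}) · det(A_{j|k}). -/

import Mathlib

open Matrix
namespace SylvesterAux
variable {R : Type*} [CommRing R]




lemma val_succAbove {m : ℕ} (p : Fin (m+1)) (t : Fin m) :
    ((p.succAbove t : Fin (m+1)) : ℕ) = if (t : ℕ) < (p : ℕ) then (t : ℕ) else (t : ℕ) + 1 := by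
  rw [Fin.succAbove]
  split_ifs with h1 h2 h3 <;> simp_all [Fin.lt_def] <;> omega

lemma succAbove_comm {n : ℕ} (i j : Fin (n+2)) (hij : i < j) (t : Fin n) :
    i.succAbove ((⟨j.val - 1, Nat.lt_succ_of_le (Nat.sub_le_iff_le_add.mpr (Nat.le_of_lt_succ j.isLt))⟩ : Fin (n+1)).succAbove t)
      = j.succAbove ((⟨i.val, by have := j.isLt; have := hij; omega⟩ : Fin (n+1)).succAbove t) := by
  have hj := j.isLt
  have hlt : (i : ℕ) < (j : ℕ) := hij
  apply Fin.ext
  simp only [val_succAbove]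
  split_ifs <;> omega

lemma det_updateColumn_single {m : ℕ} (B : Matrix (Fin m) (Fin m) R) (c r : Fin m) :
    (B.updateCol c (Pi.single r 1)).det = B.adjugate c r := by
  rw [← Matrix.det_transpose, ← Matrix.updateRow_transpose, ← Matrix.adjugate_apply,
    ← Matrix.adjugate_transpose, Matrix.transpose_apply]

lemma mul_updateColumn {m : ℕ} (A M : Matrix (Fin m) (Fin m) R) (c : Fin m) (v : Fin m → R) :
    A * (M.updateCol c v) = (A * M).updateCol c (A.mulVec v) := by
  ext r d
  by_cases h : d = c <;>
    simp [h, Matrix.mul_apply, Matrix.updateCol_apply, Matrix.mulVec, dotProduct]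

lemma updateColumn_comm {m : ℕ} (M : Matrix (Fin m) (Fin m) R) {c d : Fin m} (h : c ≠ d)
    (u v : Fin m → R) :
    (M.updateCol c u).updateCol d v = (M.updateCol d v).updateCol c u := by
  ext r e
  simp only [Matrix.updateCol_apply]
  rcases eq_or_ne e c with rfl | hc <;> rcases eq_or_ne e d with rfl | hd <;>
    simp_all


lemma det_one_two_cols {m : ℕ} {k l : Fin m} (h : k ≠ l) (u v : Fin m → R) :
    (((1 : Matrix (Fin m) (Fin m) R).updateCol k u).updateCol l v).det
      = u k * v l - u l * v k := by
  set C : Matrix (Fin m) (Fin m) R := (1 : Matrix (Fin m) (Fin m) R).updateCol k u with hC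
  have hdetC : C.det = u k := by
    have : C.det = Matrix.cramer (1 : Matrix (Fin m) (Fin m) R) u k := rfl
    rw [this, Matrix.cramer_one]; rfl
  have hv : v = ∑ s : Fin m, v s • (Pi.single s 1 : Fin m → R) := by
    ext r; simp [Pi.single_apply, eq_comm]
  have key : ∀ s : Fin m, (C.updateCol l (Pi.single s 1)).det =
      if s = l then u k else if s = k then -(u l) else 0 := by
    intro s
    rcases eq_or_ne s l with rfl | hsl
    · have hcol : (Pi.single s 1 : Fin m → R) = fun r => C r s := by
        ext r
        simp [hC, Matrix.updateCol_apply, Ne.symm h, Matrix.one_apply, Pi.single_apply,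
          eq_comm]
      rw [if_pos rfl, hcol, Matrix.updateCol_eq_self, hdetC]
    · rcases eq_or_ne s k with rfl | hsk
      · rw [if_neg hsl, if_pos rfl]
        have hswap : (C.updateCol l (Pi.single s 1)).submatrix id (Equiv.swap s l)
            = (1 : Matrix (Fin m) (Fin m) R).updateCol l u := by
          ext r c
          rcases eq_or_ne c s with rfl | hcs
          · simp [Matrix.submatrix_apply, Equiv.swap_apply_left, hC,
              Matrix.updateCol_apply, Pi.single_apply, Matrix.one_apply, hsl, eq_comm]
          · rcases eq_or_ne c l with rfl | hcl
            · simp [Matrix.submatrix_apply, Equiv.swap_apply_right, hC,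
                Matrix.updateCol_apply, hsl, Ne.symm hsl]
            · simp [Matrix.submatrix_apply, Equiv.swap_apply_of_ne_of_ne hcs hcl, hC,
                Matrix.updateCol_apply, hcs, hcl, Matrix.one_apply]
        have hdet2 : ((1 : Matrix (Fin m) (Fin m) R).updateCol l u).det = u l := by
          have : ((1 : Matrix (Fin m) (Fin m) R).updateCol l u).det
              = Matrix.cramer (1 : Matrix (Fin m) (Fin m) R) u l := rfl
          rw [this, Matrix.cramer_one]; rfl
        have h2 := Matrix.det_permute' (Equiv.swap s l) (C.updateCol l (Pi.single s 1))
        rw [hswap, hdet2, Equiv.Perm.sign_swap hsl] at h2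
        simp only [Units.val_neg, Units.val_one, Int.cast_neg, Int.cast_one, neg_mul,
          one_mul] at h2
        linear_combination h2
      · rw [if_neg hsl, if_neg hsk]
        refine Matrix.det_zero_of_column_eq hsl (fun r => ?_)
        rcases eq_or_ne r s with rfl | hrs <;>
          simp [hC, Matrix.updateCol_apply, hsl, Ne.symm hsk, Matrix.one_apply,
            Pi.single_apply, *]
  have hfun : (fun s => v s * (if s = l then u k else if s = k then -(u l) else 0))
      = fun s => (if s = l then v l * u k else 0) + (if s = k then v k * (-(u l)) else 0) := by
    funext s
    rcases eq_or_ne s l with rfl | h1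
    · rw [if_pos rfl, if_pos rfl, if_neg (Ne.symm h), add_zero]
    · rcases eq_or_ne s k with rfl | h2
      · rw [if_neg h1, if_pos rfl, if_neg h1, if_pos rfl, zero_add]
      · rw [if_neg h1, if_neg h2, if_neg h1, if_neg h2, mul_zero, add_zero]
  calc (C.updateCol l v).det = Matrix.cramer C v l := rfl
    _ = u k * v l - u l * v k := by
        rw [hv, map_sum, Finset.sum_apply]
        have hterm : ∀ s : Fin m,
            (Matrix.cramer C (v s • (Pi.single s 1 : Fin m → R))) l
            = v s * (if s = l then u k else if s = k then -(u l) else 0) := by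
          intro s
          rw [_root_.map_smul, Pi.smul_apply, smul_eq_mul]
          congr 1
          exact key s
        rw [Finset.sum_congr rfl fun s _ => hterm s, hfun, Finset.sum_add_distrib,
          Finset.sum_ite_eq' Finset.univ l, Finset.sum_ite_eq' Finset.univ k]
        simp only [Finset.mem_univ, if_true]
        have e1 : (∑ s : Fin m, v s • (Pi.single s 1 : Fin m → R)) l = v l := by
          simp [Finset.sum_apply, Pi.single_apply]
        have e2 : (∑ s : Fin m, v s • (Pi.single s 1 : Fin m → R)) k = v k := by
          simp [Finset.sum_apply, Pi.single_apply]
        rw [e1, e2]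
        ring

lemma submatrix_updateColumn {p q p' q' : ℕ} (A : Matrix (Fin p) (Fin q) R)
    (f : Fin p' → Fin p) {g : Fin q' → Fin q} (hg : Function.Injective g)
    {c : Fin q} {c' : Fin q'} (hc : g c' = c) (v : Fin p → R) :
    (A.updateCol c v).submatrix f g
      = (A.submatrix f g).updateCol c' (fun r => v (f r)) := by
  ext r e
  rcases eq_or_ne e c' with rfl | he
  · simp [Matrix.updateCol_apply, hc]
  · have : g e ≠ c := fun hgc => he (hg (hgc.trans hc.symm))
    simp [Matrix.updateCol_apply, he, this]

lemma single_comp {q q' : ℕ} {g : Fin q' → Fin q} (hg : Function.Injective g)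
    {c : Fin q} {c' : Fin q'} (hc : g c' = c) :
    (fun r => (Pi.single c (1:R) : Fin q → R) (g r)) = (Pi.single c' (1:R) : Fin q' → R) := by
  ext r
  rcases eq_or_ne r c' with rfl | hr
  · simp [Pi.single_apply, hc]
  · have : g r ≠ c := fun hgc => hr (hg (hgc.trans hc.symm))
    simp [Pi.single_apply, this, hr]


set_option maxHeartbeats 1000000 in
lemma det_double_single {n : ℕ} (A : Matrix (Fin (n+2)) (Fin (n+2)) R)
    (i j k l : Fin (n+2)) (hij : i < j) (hkl : k < l) :
    ((A.updateCol k (Pi.single i 1)).updateCol l (Pi.single j 1)).det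
      = (-1 : R)^((j:ℕ)+(l:ℕ)) * ((-1 : R)^((i:ℕ)+(k:ℕ)) *
        (A.submatrix
          (i.succAbove ∘ (⟨j.val - 1, Nat.lt_succ_of_le (Nat.sub_le_iff_le_add.mpr (Nat.le_of_lt_succ j.isLt))⟩ : Fin (n+1)).succAbove)
          (k.succAbove ∘ (⟨l.val - 1, Nat.lt_succ_of_le (Nat.sub_le_iff_le_add.mpr (Nat.le_of_lt_succ l.isLt))⟩ : Fin (n+1)).succAbove)).det) := by
  have hjn := j.isLt
  have hln := l.isLt
  have hijv : (i:ℕ) < j := hij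
  have hklv : (k:ℕ) < l := hkl
  set i' : Fin (n+1) := ⟨i.val, by omega⟩ with hi'
  set k' : Fin (n+1) := ⟨k.val, by omega⟩ with hk'
  have hji' : j.succAbove i' = i := by
    apply Fin.ext; rw [val_succAbove]; simp only [hi']; rw [if_pos hijv]
  have hlk' : l.succAbove k' = k := by
    apply Fin.ext; rw [val_succAbove]; simp only [hk']; rw [if_pos hklv]
  rw [det_updateColumn_single]
  rw [Matrix.adjugate_fin_succ_eq_det_submatrix]
  rw [submatrix_updateColumn _ j.succAbove (Fin.succAbove_right_injective) hlk']
  rw [single_comp (Fin.succAbove_right_injective) hji']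
  rw [det_updateColumn_single]
  rw [Matrix.adjugate_fin_succ_eq_det_submatrix]
  rw [Matrix.submatrix_submatrix]
  have hcr : j.succAbove ∘ i'.succAbove
      = i.succAbove ∘ (⟨j.val - 1, Nat.lt_succ_of_le (Nat.sub_le_iff_le_add.mpr (Nat.le_of_lt_succ j.isLt))⟩ : Fin (n+1)).succAbove := by
    funext t
    exact (succAbove_comm i j hij t).symm
  have hcc : l.succAbove ∘ k'.succAbove
      = k.succAbove ∘ (⟨l.val - 1, Nat.lt_succ_of_le (Nat.sub_le_iff_le_add.mpr (Nat.le_of_lt_succ l.isLt))⟩ : Fin (n+1)).succAbove := by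
    funext t
    exact (succAbove_comm k l hkl t).symm
  have hsub : A.submatrix (j.succAbove ∘ i'.succAbove) (l.succAbove ∘ k'.succAbove)
      = A.submatrix
          (i.succAbove ∘ (⟨j.val - 1, Nat.lt_succ_of_le (Nat.sub_le_iff_le_add.mpr (Nat.le_of_lt_succ j.isLt))⟩ : Fin (n+1)).succAbove)
          (k.succAbove ∘ (⟨l.val - 1, Nat.lt_succ_of_le (Nat.sub_le_iff_le_add.mpr (Nat.le_of_lt_succ l.isLt))⟩ : Fin (n+1)).succAbove) := by
    exact congrArg₂ (fun f g => A.submatrix f g) hcr hcc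
  rw [hsub]


set_option maxHeartbeats 1000000 in
lemma core {n : ℕ} (A : Matrix (Fin (n+2)) (Fin (n+2)) R)
    (i j k l : Fin (n+2)) (hij : i < j) (hkl : k < l) :
    A.det *
      ((A.submatrix i.succAbove k.succAbove).det * (A.submatrix j.succAbove l.succAbove).det
        - (A.submatrix i.succAbove l.succAbove).det * (A.submatrix j.succAbove k.succAbove).det)
    = A.det * (A.det *
      (A.submatrix
        (i.succAbove ∘ (⟨j.val - 1, Nat.lt_succ_of_le (Nat.sub_le_iff_le_add.mpr (Nat.le_of_lt_succ j.isLt))⟩ : Fin (n+1)).succAbove)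
        (k.succAbove ∘ (⟨l.val - 1, Nat.lt_succ_of_le (Nat.sub_le_iff_le_add.mpr (Nat.le_of_lt_succ l.isLt))⟩ : Fin (n+1)).succAbove)).det) := by
  set u : Fin (n+2) → R := fun r => A.adjugate r i with hu
  set v : Fin (n+2) → R := fun r => A.adjugate r j with hv
  set N : Matrix (Fin (n+2)) (Fin (n+2)) R :=
    ((1 : Matrix (Fin (n+2)) (Fin (n+2)) R).updateCol k u).updateCol l v with hN
  have hmvu : A.mulVec u = A.det • (Pi.single i 1 : Fin (n+2) → R) := by
    have h1 : u = (A.adjugate).mulVec (Pi.single i 1 : Fin (n+2) → R) := by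
      funext r; simp [hu, Matrix.mulVec, dotProduct, Pi.single_apply]
    rw [h1, Matrix.mulVec_mulVec, Matrix.mul_adjugate, Matrix.smul_mulVec,
      Matrix.one_mulVec]
  have hmvv : A.mulVec v = A.det • (Pi.single j 1 : Fin (n+2) → R) := by
    have h1 : v = (A.adjugate).mulVec (Pi.single j 1 : Fin (n+2) → R) := by
      funext r; simp [hv, Matrix.mulVec, dotProduct, Pi.single_apply]
    rw [h1, Matrix.mulVec_mulVec, Matrix.mul_adjugate, Matrix.smul_mulVec,
      Matrix.one_mulVec]
  have hAN : A * N = (A.updateCol k (A.det • (Pi.single i 1 : Fin (n+2) → R))).updateCol l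
      (A.det • (Pi.single j 1 : Fin (n+2) → R)) := by
    rw [hN, mul_updateColumn, mul_updateColumn, Matrix.mul_one, hmvu, hmvv]
  have hdetAN : A.det * N.det =
      ((A.updateCol k (A.det • (Pi.single i 1 : Fin (n+2) → R))).updateCol l
      (A.det • (Pi.single j 1 : Fin (n+2) → R))).det := by
    rw [← Matrix.det_mul, hAN]
  have hdetN : N.det = u k * v l - u l * v k := det_one_two_cols hkl.ne u v
  have hsm : ((A.updateCol k (A.det • (Pi.single i 1 : Fin (n+2) → R))).updateCol l
      (A.det • (Pi.single j 1 : Fin (n+2) → R))).det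
      = A.det * (A.det *
        ((A.updateCol k (Pi.single i 1)).updateCol l (Pi.single j 1)).det) := by
    rw [Matrix.det_updateCol_smul, updateColumn_comm _ hkl.ne, Matrix.det_updateCol_smul,
      updateColumn_comm _ hkl.ne.symm]
  have hadj : ∀ (p q : Fin (n+2)), A.adjugate p q
      = (-1 : R)^((q:ℕ)+(p:ℕ)) * (A.submatrix q.succAbove p.succAbove).det :=
    fun p q => Matrix.adjugate_fin_succ_eq_det_submatrix A p q
  have hE := hdetAN
  rw [hdetN, hsm, det_double_single A i j k l hij hkl] at hE
  have huk : u k = (-1 : R)^((i:ℕ)+(k:ℕ)) * (A.submatrix i.succAbove k.succAbove).det :=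
    hadj k i
  have hvl : v l = (-1 : R)^((j:ℕ)+(l:ℕ)) * (A.submatrix j.succAbove l.succAbove).det :=
    hadj l j
  have hul : u l = (-1 : R)^((i:ℕ)+(l:ℕ)) * (A.submatrix i.succAbove l.succAbove).det :=
    hadj l i
  have hvk : v k = (-1 : R)^((j:ℕ)+(k:ℕ)) * (A.submatrix j.succAbove k.succAbove).det :=
    hadj k j
  rw [huk, hvl, hul, hvk] at hE
  have hsq : ∀ m₁ m₂ : ℕ, m₁ + m₂ = (i:ℕ)+(j:ℕ)+(k:ℕ)+(l:ℕ) →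
      (-1 : R)^m₁ * (-1 : R)^m₂ = (-1:R)^((i:ℕ)+(j:ℕ)+(k:ℕ)+(l:ℕ)) := by
    intro m₁ m₂ h
    rw [← pow_add, h]
  have e1 := hsq ((i:ℕ)+(k:ℕ)) ((j:ℕ)+(l:ℕ)) (by ring)
  have e2 := hsq ((i:ℕ)+(l:ℕ)) ((j:ℕ)+(k:ℕ)) (by ring)
  have e3 := hsq ((j:ℕ)+(l:ℕ)) ((i:ℕ)+(k:ℕ)) (by ring)
  set ε : R := (-1:R)^((i:ℕ)+(j:ℕ)+(k:ℕ)+(l:ℕ)) with hε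
  have hε2 : ε * ε = 1 := by
    rw [hε, ← pow_add, ← two_mul, pow_mul]
    norm_num
  set Mik := (A.submatrix i.succAbove k.succAbove).det
  set Mjl := (A.submatrix j.succAbove l.succAbove).det
  set Mil := (A.submatrix i.succAbove l.succAbove).det
  set Mjk := (A.submatrix j.succAbove k.succAbove).det
  set D := (A.submatrix
        (i.succAbove ∘ (⟨j.val - 1, Nat.lt_succ_of_le (Nat.sub_le_iff_le_add.mpr (Nat.le_of_lt_succ j.isLt))⟩ : Fin (n+1)).succAbove)
        (k.succAbove ∘ (⟨l.val - 1, Nat.lt_succ_of_le (Nat.sub_le_iff_le_add.mpr (Nat.le_of_lt_succ l.isLt))⟩ : Fin (n+1)).succAbove)).det with hD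
  -- hE : A.det * ((-1)^(i+k)*Mik * ((-1)^(j+l)*Mjl) - (-1)^(i+l)*Mil * ((-1)^(j+k)*Mjk))
  --      = A.det * (A.det * ((-1)^(j+l) * ((-1)^(i+k) * D)))
  have hE' : A.det * (ε * (Mik * Mjl - Mil * Mjk)) = A.det * (A.det * (ε * D)) := by
    calc A.det * (ε * (Mik * Mjl - Mil * Mjk))
        = A.det * ((-1:R)^((i:ℕ)+(k:ℕ)) * Mik * ((-1:R)^((j:ℕ)+(l:ℕ)) * Mjl)
            - (-1:R)^((i:ℕ)+(l:ℕ)) * Mil * ((-1:R)^((j:ℕ)+(k:ℕ)) * Mjk)) := by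
          linear_combination (-(A.det * Mik * Mjl)) * e1 + (A.det * Mil * Mjk) * e2
      _ = A.det * (A.det * ((-1:R)^((j:ℕ)+(l:ℕ)) * ((-1:R)^((i:ℕ)+(k:ℕ)) * D))) := hE
      _ = A.det * (A.det * (ε * D)) := by linear_combination (A.det * A.det * D) * e3
  linear_combination ε * hE' + (A.det * (A.det * D) - A.det * (Mik * Mjl - Mil * Mjk)) * hε2

end SylvesterAux

/-- Sylvester's determinant identity: for an `(n+2) × (n+2)` matrix `A` over a
commutative ring, row indices `i < j` and column indices `k < ℓ`,
`det A * det A_{i,j|k,ℓ} = det A_{i|k} * det A_{j|ℓ} - det A_{i|ℓ} * det A_{j|k}`,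
where `A_{i|k}` deletes row `i` and column `k`, and `A_{i,j|k,ℓ}` deletes rows
`i, j` and columns `k, ℓ` (realized by composing the two deletions). -/
theorem sylvester_det_identity {R : Type*} [CommRing R] (n : ℕ)
    (A : Matrix (Fin (n + 2)) (Fin (n + 2)) R)
    (i j k l : Fin (n + 2)) (hij : i < j) (hkl : k < l) :
    A.det *
      (A.submatrix
        (i.succAbove ∘ (⟨j.val - 1, by have := j.isLt; omega⟩ : Fin (n + 1)).succAbove)
        (k.succAbove ∘ (⟨l.val - 1, by have := l.isLt; omega⟩ : Fin (n + 1)).succAbove)).det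
    = (A.submatrix i.succAbove k.succAbove).det * (A.submatrix j.succAbove l.succAbove).det
      - (A.submatrix i.succAbove l.succAbove).det * (A.submatrix j.succAbove k.succAbove).det := by
  set A' : Matrix (Fin (n+2)) (Fin (n+2)) (MvPolynomial (Fin (n+2) × Fin (n+2)) ℤ) :=
    Matrix.mvPolynomialX (Fin (n+2)) (Fin (n+2)) ℤ with hA'
  have hcore := SylvesterAux.core A' i j k l hij hkl
  have hcancel := mul_left_cancel₀ (Matrix.det_mvPolynomialX_ne_zero (Fin (n+2)) ℤ) hcore
  set φ : MvPolynomial (Fin (n+2) × Fin (n+2)) ℤ →+* R :=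
    (MvPolynomial.eval₂Hom (Int.castRingHom R)
      fun p : (Fin (n+2)) × (Fin (n+2)) => A p.1 p.2) with hφ
  have hmap : A'.map φ = A := Matrix.mvPolynomialX_map_eval₂ _ A
  have hthis := congrArg φ hcancel
  simp only [map_sub, _root_.map_mul, RingHom.map_det, RingHom.mapMatrix_apply,
    ← Matrix.submatrix_map, hmap] at hthis
  exact hthis.symm
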